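/- The presented group ⟨ℓ, x₁, x₂ ∣ [x₁, x₂] = 1, ℓ⁻¹x₁ℓ = x₂, ℓ⁻¹x₂ℓ = x₁⟩ is isomorphic to the presented group ⟨y, x ∣ [x², y] = 1, [y², x] = 1⟩. -/

import Mathlib

open scoped commutatorElement

/-- The relators of `⟨ℓ, x₁, x₂ ∣ [x₁, x₂] = 1, ℓ⁻¹x₁ℓ = x₂, ℓ⁻¹x₂ℓ = x₁⟩`, with
generators `ℓ = 0`, `x₁ = 1`, `x₂ = 2`. -/
def relsLX : Set (FreeGroup (Fin 3)) :=
  let l : FreeGroup (Fin 3) := FreeGroup.of 0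
  let x₁ : FreeGroup (Fin 3) := FreeGroup.of 1
  let x₂ : FreeGroup (Fin 3) := FreeGroup.of 2
  { ⁅x₁, x₂⁆, l⁻¹ * x₁ * l * x₂⁻¹, l⁻¹ * x₂ * l * x₁⁻¹ }

/-- The relators of `⟨y, x ∣ [x², y] = 1, [y², x] = 1⟩`, with generators
`y = 0`, `x = 1`. -/
def relsYX : Set (FreeGroup (Fin 2)) :=
  let y : FreeGroup (Fin 2) := FreeGroup.of 0
  let x : FreeGroup (Fin 2) := FreeGroup.of 1
  { ⁅x ^ 2, y⁆, ⁅y ^ 2, x⁆ }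

lemma aux_mk_rel_one {α : Type*} {rels : Set (FreeGroup α)} {r : FreeGroup α} (h : r ∈ rels) :
    PresentedGroup.mk rels r = 1 :=
  (QuotientGroup.eq_one_iff r).2 (Subgroup.subset_normalClosure h)

section aux

local notation "L" => (PresentedGroup.of 0 : PresentedGroup relsLX)
local notation "A" => (PresentedGroup.of 1 : PresentedGroup relsLX)
local notation "B" => (PresentedGroup.of 2 : PresentedGroup relsLX)
local notation "Y" => (PresentedGroup.of 0 : PresentedGroup relsYX)
local notation "X" => (PresentedGroup.of 1 : PresentedGroup relsYX)

lemma aux_AB : Commute A B := by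
  have h := aux_mk_rel_one (show ⁅(FreeGroup.of 1 : FreeGroup (Fin 3)), FreeGroup.of 2⁆ ∈ relsLX by
    simp [relsLX])
  rw [map_commutatorElement] at h
  exact commutatorElement_eq_one_iff_commute.mp h

lemma aux_AL : A * L = L * B := by
  have h := aux_mk_rel_one (show ((FreeGroup.of 0)⁻¹ * FreeGroup.of 1 * FreeGroup.of 0 *
      (FreeGroup.of 2)⁻¹ : FreeGroup (Fin 3)) ∈ relsLX by simp [relsLX])
  simp only [map_mul, map_inv] at h
  have h' : L⁻¹ * A * L = B := mul_inv_eq_one.mp h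
  calc A * L = L * (L⁻¹ * A * L) := by group
    _ = L * B := by rw [h']

lemma aux_BL : B * L = L * A := by
  have h := aux_mk_rel_one (show ((FreeGroup.of 0)⁻¹ * FreeGroup.of 2 * FreeGroup.of 0 *
      (FreeGroup.of 1)⁻¹ : FreeGroup (Fin 3)) ∈ relsLX by simp [relsLX])
  simp only [map_mul, map_inv] at h
  have h' : L⁻¹ * B * L = A := mul_inv_eq_one.mp h
  calc B * L = L * (L⁻¹ * B * L) := by group
    _ = L * A := by rw [h']

lemma aux_X2Y : Commute (X ^ 2) Y := by
  have h := aux_mk_rel_one (show ⁅(FreeGroup.of 1 : FreeGroup (Fin 2)) ^ 2, FreeGroup.of 0⁆ ∈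
      relsYX by simp [relsYX])
  rw [map_commutatorElement, map_pow] at h
  exact commutatorElement_eq_one_iff_commute.mp h

lemma aux_Y2X : Commute (Y ^ 2) X := by
  have h := aux_mk_rel_one (show ⁅(FreeGroup.of 0 : FreeGroup (Fin 2)) ^ 2, FreeGroup.of 1⁆ ∈
      relsYX by simp [relsYX])
  rw [map_commutatorElement, map_pow] at h
  exact commutatorElement_eq_one_iff_commute.mp h

lemma aux_hA : X * Y⁻¹ * Y⁻¹ = Y⁻¹ * Y⁻¹ * X := by
  have h := aux_Y2X.inv_left.eq
  simp only [pow_two, mul_inv_rev, ← mul_assoc] at h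
  exact h.symm

lemma aux_hB : X * (X * Y⁻¹) = Y⁻¹ * (X * X) := by
  have h := aux_X2Y.inv_right.eq
  simp only [pow_two, mul_inv_rev, ← mul_assoc] at h
  simp only [← mul_assoc]
  rw [h]

lemma aux_hC : X * Y * Y = Y * Y * X := by
  have h := aux_Y2X.eq
  simp only [pow_two, ← mul_assoc] at h
  exact h.symm

lemma aux_hA' (z : PresentedGroup relsYX) :
    X * (Y⁻¹ * (Y⁻¹ * z)) = Y⁻¹ * (Y⁻¹ * (X * z)) := by
  simp only [← mul_assoc]; rw [aux_hA]

lemma aux_hC' (z : PresentedGroup relsYX) :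
    X * (Y * (Y * z)) = Y * (Y * (X * z)) := by
  simp only [← mul_assoc]; rw [aux_hC]

lemma aux_rl1 (z : PresentedGroup relsLX) : A * (L * z) = L * (B * z) := by
  simp only [← mul_assoc]; rw [aux_AL]

lemma aux_rl2 (z : PresentedGroup relsLX) : B * (L * z) = L * (A * z) := by
  simp only [← mul_assoc]; rw [aux_BL]

lemma aux_rc (z : PresentedGroup relsLX) : B * (A * z) = A * (B * z) := by
  simp only [← mul_assoc]; rw [← aux_AB.eq]

/-- The map `Fin 3 → PresentedGroup relsYX`: `ℓ ↦ y`, `x₁ ↦ x y⁻¹`, `x₂ ↦ y⁻¹ x`. -/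
def fLX : Fin 3 → PresentedGroup relsYX
  | 0 => Y
  | 1 => X * Y⁻¹
  | 2 => Y⁻¹ * X

/-- The map `Fin 2 → PresentedGroup relsLX`: `y ↦ ℓ`, `x ↦ x₁ ℓ`. -/
def gYX : Fin 2 → PresentedGroup relsLX
  | 0 => L
  | 1 => A * L

lemma fLX_rels : ∀ r ∈ relsLX, FreeGroup.lift fLX r = 1 := by
  intro r hr
  simp only [relsLX, Set.mem_insert_iff, Set.mem_singleton_iff] at hr
  rcases hr with h | h | h <;> subst h
  · rw [map_commutatorElement, commutatorElement_eq_one_iff_commute]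
    show FreeGroup.lift fLX (FreeGroup.of 1) * FreeGroup.lift fLX (FreeGroup.of 2) = _
    simp only [FreeGroup.lift_apply_of, fLX]
    show X * Y⁻¹ * (Y⁻¹ * X) = Y⁻¹ * X * (X * Y⁻¹)
    simp only [mul_assoc]
    rw [aux_hA', aux_hB]
  · simp only [map_mul, map_inv, FreeGroup.lift_apply_of, fLX]
    show Y⁻¹ * (X * Y⁻¹) * Y * (Y⁻¹ * X)⁻¹ = 1
    group
  · simp only [map_mul, map_inv, FreeGroup.lift_apply_of, fLX]
    show Y⁻¹ * (Y⁻¹ * X) * Y * (X * Y⁻¹)⁻¹ = 1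
    have e : Y⁻¹ * (Y⁻¹ * X) * Y * (X * Y⁻¹)⁻¹
        = Y⁻¹ * (Y⁻¹ * (X * (Y * (Y * X⁻¹)))) := by group
    rw [e, aux_hC']
    group

lemma gYX_rels : ∀ r ∈ relsYX, FreeGroup.lift gYX r = 1 := by
  intro r hr
  simp only [relsYX, Set.mem_insert_iff, Set.mem_singleton_iff] at hr
  rcases hr with h | h <;> subst h
  · rw [map_commutatorElement, map_pow, commutatorElement_eq_one_iff_commute]
    show Commute ((FreeGroup.lift gYX (FreeGroup.of 1)) ^ 2) (FreeGroup.lift gYX (FreeGroup.of 0))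
    simp only [FreeGroup.lift_apply_of, gYX]
    show (A * L) ^ 2 * L = L * ((A * L) ^ 2)
    simp only [pow_two, mul_assoc]
    rw [aux_rl1, aux_rc, aux_rl2]
  · rw [map_commutatorElement, map_pow, commutatorElement_eq_one_iff_commute]
    show Commute ((FreeGroup.lift gYX (FreeGroup.of 0)) ^ 2) (FreeGroup.lift gYX (FreeGroup.of 1))
    simp only [FreeGroup.lift_apply_of, gYX]
    show L ^ 2 * (A * L) = A * L * L ^ 2
    simp only [pow_two, mul_assoc]
    rw [← aux_rl2, ← aux_rl1]

end aux

/-- `⟨ℓ, x₁, x₂ ∣ [x₁, x₂] = 1, ℓ⁻¹x₁ℓ = x₂, ℓ⁻¹x₂ℓ = x₁⟩` is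
isomorphic to `⟨y, x ∣ [x², y] = 1, [y², x] = 1⟩`. -/
theorem K2_two_presentations :
    Nonempty (PresentedGroup relsLX ≃* PresentedGroup relsYX) := by
  let φ : PresentedGroup relsLX →* PresentedGroup relsYX := PresentedGroup.toGroup fLX_rels
  let ψ : PresentedGroup relsYX →* PresentedGroup relsLX := PresentedGroup.toGroup gYX_rels
  have hψφ : ψ.comp φ = MonoidHom.id _ := by
    apply PresentedGroup.ext
    intro i
    fin_cases i
    · show ψ (φ (PresentedGroup.of 0)) = PresentedGroup.of 0
      simp only [φ, ψ, PresentedGroup.toGroup.of, fLX, gYX]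
    · show ψ (φ (PresentedGroup.of 1)) = PresentedGroup.of 1
      simp only [φ, ψ, PresentedGroup.toGroup.of, fLX, gYX, map_mul, map_inv]
      group
    · show ψ (φ (PresentedGroup.of 2)) = PresentedGroup.of 2
      simp only [φ, ψ, PresentedGroup.toGroup.of, fLX, gYX, map_mul, map_inv]
      rw [aux_AL]
      group
  have hφψ : φ.comp ψ = MonoidHom.id _ := by
    apply PresentedGroup.ext
    intro i
    fin_cases i
    · show φ (ψ (PresentedGroup.of 0)) = PresentedGroup.of 0
      simp only [φ, ψ, PresentedGroup.toGroup.of, fLX, gYX]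
    · show φ (ψ (PresentedGroup.of 1)) = PresentedGroup.of 1
      simp only [φ, ψ, PresentedGroup.toGroup.of, fLX, gYX, map_mul, map_inv]
      group
  exact ⟨MonoidHom.toMulEquiv φ ψ hψφ hφψ⟩
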